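/- If a function f is analytic in a disc |x|<R with R>1, satisfies f(x)f(y+1) - f(y)f(x+1) = f(x-y) for all x,y, and is not identically zero, then there exists a complex number η such that f(x) = sinh(ηx)/sinh(η) (interpreted as f(x)=x when η=0). -/

import Mathlib

open Metric

private lemma iterZeroFun (n : ℕ) : iteratedDeriv n (fun _ : ℂ => (0:ℂ)) = fun _ => 0 := by
  induction n with
  | zero => simp
  | succ n ih =>
    rw [iteratedDeriv_succ']
    have : deriv (fun _ : ℂ => (0:ℂ)) = fun _ => (0:ℂ) := by
      funext x; exact deriv_const x 0
    rw [this, ih]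

private lemma iterConstFun (c : ℂ) (n : ℕ) :
    iteratedDeriv n (fun _ : ℂ => c) = if n = 0 then (fun _ => c) else fun _ => 0 := by
  cases n with
  | zero => simp
  | succ n =>
    rw [iteratedDeriv_succ']
    have : deriv (fun _ : ℂ => c) = fun _ => (0:ℂ) := by
      funext x; exact deriv_const x c
    rw [this, iterZeroFun]
    simp

private lemma iterLinFun (c : ℂ) (n : ℕ) :
    iteratedDeriv n (fun z : ℂ => c * z) =
      if n = 0 then (fun z => c * z) else if n = 1 then (fun _ => c) else fun _ => 0 := by
  cases n with
  | zero => simp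
  | succ n =>
    rw [iteratedDeriv_succ']
    have : deriv (fun z : ℂ => c * z) = fun _ => c := by
      funext z
      simpa using ((hasDerivAt_id z).const_mul c).deriv
    rw [this, iterConstFun]
    rcases Nat.eq_zero_or_pos n with h | h
    · subst h; simp
    · simp [Nat.pos_iff_ne_zero.mp h, Nat.succ_ne_zero]

private lemma sinhCoshIter (n : ℕ) :
    iteratedDeriv n Complex.sinh = (if Even n then Complex.sinh else Complex.cosh) ∧
    iteratedDeriv n Complex.cosh = (if Even n then Complex.cosh else Complex.sinh) := by
  induction n with
  | zero => simp
  | succ n ih =>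
    rcases Nat.even_or_odd n with he | ho
    · have h1 : ¬ Even (n+1) := by simp [Nat.even_add_one, he]
      rw [iteratedDeriv_succ, iteratedDeriv_succ, ih.1, ih.2, if_pos he, if_pos he,
        if_neg h1, if_neg h1]
      exact ⟨Complex.deriv_sinh, Complex.deriv_cosh⟩
    · have he : ¬ Even n := Nat.not_even_iff_odd.mpr ho
      have h1 : Even (n+1) := by simpa [Nat.even_add_one] using he
      rw [iteratedDeriv_succ, iteratedDeriv_succ, ih.1, ih.2, if_neg he, if_neg he,
        if_pos h1, if_pos h1]
      exact ⟨Complex.deriv_cosh, Complex.deriv_sinh⟩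

private lemma eqOnBallOfIter {R : ℝ} {f g : ℂ → ℂ}
    (hf : DifferentiableOn ℂ f (ball (0:ℂ) R)) (hg : DifferentiableOn ℂ g (ball (0:ℂ) R))
    (h : ∀ n, iteratedDeriv n f 0 = iteratedDeriv n g 0) :
    ∀ x ∈ ball (0:ℂ) R, f x = g x := by
  intro x hx
  rw [← Complex.taylorSeries_eq_on_ball' hx hf, ← Complex.taylorSeries_eq_on_ball' hx hg]
  exact tsum_congr fun n => by rw [h n]

theorem stmt0 (R : ℝ) (hR : 1 < R) (f : ℂ → ℂ)
    (hf : AnalyticOn ℂ f (ball (0 : ℂ) R))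
    (heq : ∀ x y : ℂ, x ∈ ball (0 : ℂ) R → y ∈ ball (0 : ℂ) R →
      x + 1 ∈ ball (0 : ℂ) R → y + 1 ∈ ball (0 : ℂ) R → x - y ∈ ball (0 : ℂ) R →
      f x * f (y + 1) - f y * f (x + 1) = f (x - y))
    (hne : ∃ x ∈ ball (0 : ℂ) R, f x ≠ 0) :
    ∃ η : ℂ, ∀ x ∈ ball (0 : ℂ) R,
      f x = if η = 0 then x else Complex.sinh (η * x) / Complex.sinh η := by
  have hR0 : (0:ℝ) < R := lt_trans one_pos hR
  have hfn : AnalyticOnNhd ℂ f (ball 0 R) := (isOpen_ball.analyticOn_iff_analyticOnNhd).mp hf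
  have hfd : DifferentiableOn ℂ f (ball 0 R) := hfn.differentiableOn
  have hmem : ∀ z : ℂ, ‖z‖ < R → z ∈ ball (0:ℂ) R := fun z hz => mem_ball_zero_iff.mpr hz
  have hdiff : ∀ z : ℂ, ‖z‖ < R → DifferentiableAt ℂ f z := fun z hz =>
    (hfn z (hmem z hz)).differentiableAt
  set δ : ℝ := min (R - 1) 1 with hδdef
  have hδ0 : 0 < δ := lt_min (by linarith) one_pos
  have hδR : δ + 1 ≤ R := by
    have : δ ≤ R - 1 := min_le_left _ _
    linarith
  have hδ1 : δ ≤ 1 := min_le_right _ _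
  have h1R : ‖(1:ℂ)‖ < R := by simpa using hR
  have h0R : ‖(0:ℂ)‖ < R := by simpa using hR0
  have h01R : (0:ℂ) + 1 ∈ ball (0:ℂ) R := by
    rw [zero_add]; exact hmem 1 h1R
  -- f 0 = 0
  have hf0 : f 0 = 0 := by
    have h := heq 0 0 (hmem _ h0R) (hmem _ h0R) h01R h01R (by rw [sub_zero]; exact hmem _ h0R)
    simpa using h.symm
  -- small ball identity
  have hB : ∀ x : ℂ, ‖x‖ < δ → f x * f 1 = f x := by
    intro x hx
    have hxR : ‖x‖ < R := lt_of_lt_of_le hx (by linarith)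
    have hx1 : ‖x + 1‖ < R := by
      calc ‖x + 1‖ ≤ ‖x‖ + ‖(1:ℂ)‖ := norm_add_le x 1
        _ < δ + 1 := by simp only [norm_one]; linarith
        _ ≤ R := hδR
    have h := heq x 0 (hmem _ hxR) (hmem _ h0R) (hmem _ hx1) h01R
      (by rw [sub_zero]; exact hmem _ hxR)
    rw [zero_add, hf0, zero_mul, sub_zero, sub_zero] at h
    exact h
  -- f 1 = 1
  have hf1 : f 1 = 1 := by
    by_contra hne1
    have hz : ∀ x : ℂ, ‖x‖ < δ → f x = 0 := by
      intro x hx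
      have h := hB x hx
      have h' : f x * (f 1 - 1) = 0 := by ring_nf; linear_combination h
      rcases mul_eq_zero.mp h' with h | h
      · exact h
      · exact absurd (by linear_combination h) hne1
    have hiz : ∀ n, iteratedDeriv n f 0 = iteratedDeriv n (fun _ : ℂ => (0:ℂ)) 0 := by
      intro n
      apply Filter.EventuallyEq.iteratedDeriv_eq
      filter_upwards [Metric.ball_mem_nhds (0:ℂ) hδ0] with y hy
      exact hz y (mem_ball_zero_iff.mp hy)
    obtain ⟨x0, hx0, hfx0⟩ := hne
    exact hfx0 (eqOnBallOfIter hfd (differentiableOn_const 0) hiz x0 hx0)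
  -- derivatives
  set f' : ℂ → ℂ := deriv f with hf'def
  set f'' : ℂ → ℂ := deriv f' with hf''def
  have hf'n : AnalyticOnNhd ℂ f' (ball 0 R) := hfn.deriv
  have hdiff' : ∀ z : ℂ, ‖z‖ < R → DifferentiableAt ℂ f' z := fun z hz =>
    (hf'n z (hmem z hz)).differentiableAt
  have hODE : ∀ x : ℂ, ‖x‖ < δ/2 → f x * f'' 1 - f'' 0 * f (x+1) = f'' x := by
    intro x hx
    have hxδ : ‖x‖ < δ := lt_of_lt_of_le hx (by linarith)
    have hxR : ‖x‖ < R := lt_of_lt_of_le hxδ (by linarith)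
    have hx1R : ‖x + 1‖ < R := by
      calc ‖x + 1‖ ≤ ‖x‖ + ‖(1:ℂ)‖ := norm_add_le x 1
        _ < δ + 1 := by simp only [norm_one]; linarith
        _ ≤ R := hδR
    set s := ball (0:ℂ) (δ/2) with hsdef
    have hs : IsOpen s := isOpen_ball
    have h0s : (0:ℂ) ∈ s := mem_ball_zero_iff.mpr (by simpa using half_pos hδ0)
    have hG0 : ∀ y ∈ s, f x * f (y+1) - f y * f (x+1) - f (x-y) = 0 := by
      intro y hy
      have hyδ : ‖y‖ < δ/2 := mem_ball_zero_iff.mp hy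
      have hyR : ‖y‖ < R := by linarith
      have hy1R : ‖y + 1‖ < R := by
        calc ‖y + 1‖ ≤ ‖y‖ + ‖(1:ℂ)‖ := norm_add_le y 1
          _ < δ + 1 := by simp only [norm_one]; linarith
          _ ≤ R := hδR
      have hxyR : ‖x - y‖ < R := by
        calc ‖x - y‖ ≤ ‖x‖ + ‖y‖ := norm_sub_le x y
          _ < δ := by linarith
          _ < R := by linarith
      rw [heq x y (hmem _ hxR) (hmem _ hyR) (hmem _ hx1R) (hmem _ hy1R) (hmem _ hxyR)]
      exact sub_self _
    have hH0 : ∀ y ∈ s, f x * f' (y+1) - f' y * f (x+1) + f' (x-y) = 0 := by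
      intro y hy
      have hyδ : ‖y‖ < δ/2 := mem_ball_zero_iff.mp hy
      have hyR : ‖y‖ < R := by linarith
      have hy1R : ‖y + 1‖ < R := by
        calc ‖y + 1‖ ≤ ‖y‖ + ‖(1:ℂ)‖ := norm_add_le y 1
          _ < δ + 1 := by simp only [norm_one]; linarith
          _ ≤ R := hδR
      have hxyR : ‖x - y‖ < R := by
        calc ‖x - y‖ ≤ ‖x‖ + ‖y‖ := norm_sub_le x y
          _ < δ := by linarith
          _ < R := by linarith
      have d1 : HasDerivAt (fun t : ℂ => f (t+1)) (f' (y+1)) y := by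
        have h := HasDerivAt.comp y ((hdiff _ hy1R).hasDerivAt) ((hasDerivAt_id y).add_const 1)
        simpa [Function.comp_def] using h
      have d2 : HasDerivAt f (f' y) y := (hdiff _ hyR).hasDerivAt
      have d3 : HasDerivAt (fun t : ℂ => f (x - t)) (-f' (x-y)) y := by
        have hinner : HasDerivAt (fun t : ℂ => x - t) (-1) y := by
          simpa using (hasDerivAt_id y).const_sub x
        have h := HasDerivAt.comp y ((hdiff _ hxyR).hasDerivAt) hinner
        simpa [Function.comp_def] using h
      have dG : HasDerivAt (fun t : ℂ => f x * f (t+1) - f t * f (x+1) - f (x - t))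
          (f x * f' (y+1) - f' y * f (x+1) - (-f' (x-y))) y :=
        ((d1.const_mul (f x)).sub (d2.mul_const (f (x+1)))).sub d3
      have hEq : (fun t : ℂ => f x * f (t+1) - f t * f (x+1) - f (x - t))
          =ᶠ[nhds y] fun _ => (0:ℂ) := by
        filter_upwards [hs.mem_nhds hy] with t ht using hG0 t ht
      have dZ : HasDerivAt (fun _ : ℂ => (0:ℂ))
          (f x * f' (y+1) - f' y * f (x+1) - (-f' (x-y))) y :=
        dG.congr_of_eventuallyEq hEq.symm
      have h0 : f x * f' (y+1) - f' y * f (x+1) - (-f' (x-y)) = 0 := by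
        have h := dZ.deriv
        rw [deriv_const] at h
        exact h.symm
      linear_combination h0
    -- differentiate H at 0
    have e1 : HasDerivAt (fun t : ℂ => f' (t+1)) (f'' 1) 0 := by
      have h01 : ‖(0:ℂ)+1‖ < R := by rw [zero_add]; exact h1R
      have houter : HasDerivAt f' (f'' ((0:ℂ)+1)) ((0:ℂ)+1) := (hdiff' _ h01).hasDerivAt
      have h := HasDerivAt.comp (0:ℂ) houter ((hasDerivAt_id (0:ℂ)).add_const 1)
      simpa [Function.comp_def] using h
    have e2 : HasDerivAt f' (f'' 0) 0 := (hdiff' _ h0R).hasDerivAt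
    have e3 : HasDerivAt (fun t : ℂ => f' (x - t)) (-f'' x) 0 := by
      have hinner : HasDerivAt (fun t : ℂ => x - t) (-1) (0:ℂ) := by
        simpa using (hasDerivAt_id (0:ℂ)).const_sub x
      have hx0 : ‖x - (0:ℂ)‖ < R := by rw [sub_zero]; exact hxR
      have houter : HasDerivAt f' (f'' (x - (0:ℂ))) (x - (0:ℂ)) := (hdiff' _ hx0).hasDerivAt
      have h := HasDerivAt.comp (0:ℂ) houter hinner
      simp only [sub_zero] at h
      simpa [Function.comp_def] using h
    have dH : HasDerivAt (fun t : ℂ => f x * f' (t+1) - f' t * f (x+1) + f' (x - t))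
        (f x * f'' 1 - f'' 0 * f (x+1) + (-f'' x)) 0 :=
      ((e1.const_mul (f x)).sub (e2.mul_const (f (x+1)))).add e3
    have hEqH : (fun t : ℂ => f x * f' (t+1) - f' t * f (x+1) + f' (x - t))
        =ᶠ[nhds 0] fun _ => (0:ℂ) := by
      filter_upwards [hs.mem_nhds h0s] with t ht using hH0 t ht
    have dZH : HasDerivAt (fun _ : ℂ => (0:ℂ))
        (f x * f'' 1 - f'' 0 * f (x+1) + (-f'' x)) 0 :=
      dH.congr_of_eventuallyEq hEqH.symm
    have h0 : f x * f'' 1 - f'' 0 * f (x+1) + (-f'' x) = 0 := by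
      have h := dZH.deriv
      rw [deriv_const] at h
      exact h.symm
    linear_combination h0
  have hf''0 : f'' 0 = 0 := by
    have h := hODE 0 (by simpa using half_pos hδ0)
    rw [hf0, zero_mul, zero_add, hf1, mul_one, zero_sub] at h
    have h2 : (2:ℂ) * f'' 0 = 0 := by linear_combination -h
    simpa using h2
  set μ : ℂ := f'' 1 with hμdef
  have hODE' : Set.EqOn f'' (fun z => μ * f z) (ball (0:ℂ) (δ/2)) := by
    intro y hy
    have h := hODE y (mem_ball_zero_iff.mp hy)
    rw [hf''0, zero_mul, sub_zero] at h
    simpa [mul_comm] using h.symm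
  -- recursion for Taylor coefficients
  set a : ℕ → ℂ := fun n => iteratedDeriv n f 0 with hadef
  have hs2 : IsOpen (ball (0:ℂ) (δ/2)) := isOpen_ball
  have hu : UniqueDiffOn ℂ (ball (0:ℂ) (δ/2)) := hs2.uniqueDiffOn
  have h0s2 : (0:ℂ) ∈ ball (0:ℂ) (δ/2) := mem_ball_zero_iff.mpr (by simpa using half_pos hδ0)
  have hsub : ball (0:ℂ) (δ/2) ⊆ ball (0:ℂ) R := ball_subset_ball (by linarith)
  have hIDW : ∀ (g : ℂ → ℂ) (n : ℕ),
      iteratedDerivWithin n g (ball (0:ℂ) (δ/2)) 0 = iteratedDeriv n g 0 := by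
    intro g n
    rw [iteratedDerivWithin_eq_iteratedFDerivWithin, iteratedDeriv_eq_iteratedFDeriv,
      iteratedFDerivWithin_of_isOpen n hs2 h0s2]
  have hcd : ∀ n : ℕ, ContDiffOn ℂ n f (ball (0:ℂ) (δ/2)) := fun n =>
    (hfn.mono hsub).contDiffOn hu
  have hrec : ∀ n, a (n+2) = μ * a n := by
    intro n
    have e1 : a (n+2) = iteratedDeriv n f'' 0 := by
      show iteratedDeriv (n+1+1) f 0 = iteratedDeriv n f'' 0
      rw [iteratedDeriv_succ', iteratedDeriv_succ']
    rw [e1, ← hIDW f'' n, iteratedDerivWithin_congr hODE' h0s2,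
      iteratedDerivWithin_const_mul_field μ f, hIDW f n]
  have ha0 : a 0 = 0 := by
    show iteratedDeriv 0 f 0 = 0
    rw [iteratedDeriv_zero]; exact hf0
  have hclosed : ∀ k : ℕ, a (2*k) = 0 ∧ a (2*k+1) = μ^k * a 1 := by
    intro k
    induction k with
    | zero =>
      constructor
      · simpa using ha0
      · simp
    | succ k ih =>
      constructor
      · have h2 : 2*(k+1) = 2*k + 2 := by ring
        rw [h2, hrec, ih.1, mul_zero]
      · have h2 : 2*(k+1)+1 = (2*k+1) + 2 := by ring
        rw [h2, hrec, ih.2]; ring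
  by_cases hμ : μ = 0
  · -- linear case
    refine ⟨0, fun x hx => ?_⟩
    rw [if_pos rfl]
    have hgd : DifferentiableOn ℂ (fun z : ℂ => a 1 * z) (ball (0:ℂ) R) :=
      (differentiable_id.const_mul (a 1)).differentiableOn
    have hgi : ∀ n, iteratedDeriv n f 0 = iteratedDeriv n (fun z : ℂ => a 1 * z) 0 := by
      intro n
      rw [iterLinFun]
      rcases Nat.even_or_odd n with ⟨k, hk⟩ | ⟨k, hk⟩
      · have hn : n = 2*k := by omega
        subst hn
        rcases Nat.eq_zero_or_pos k with h | h
        · subst h; simpa [a] using ha0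
        · have h1 : 2*k ≠ 0 := by omega
          have h2 : 2*k ≠ 1 := by omega
          rw [if_neg h1, if_neg h2]
          exact (hclosed k).1
      · have hn : n = 2*k+1 := by omega
        subst hn
        rcases Nat.eq_zero_or_pos k with h | h
        · subst h
          norm_num
          rw [show a 1 = iteratedDeriv 1 f 0 from rfl, iteratedDeriv_one]
        · have h1 : 2*k+1 ≠ 0 := by omega
          have h2 : 2*k+1 ≠ 1 := by omega
          rw [if_neg h1, if_neg h2]
          rw [show (iteratedDeriv (2*k+1) f 0) = a (2*k+1) from rfl, (hclosed k).2, hμ]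
          rw [zero_pow (by omega : k ≠ 0), zero_mul]
    have hfx := eqOnBallOfIter hfd hgd hgi x hx
    have hf1' := eqOnBallOfIter hfd hgd hgi 1 (hmem 1 h1R)
    rw [hf1, mul_one] at hf1'
    rw [hfx, ← hf1', one_mul]
  · -- sinh case
    set η : ℂ := μ ^ (((2:ℕ):ℂ))⁻¹ with hηdef
    have hη2 : η^2 = μ := Complex.cpow_nat_inv_pow μ two_ne_zero
    have hη0 : η ≠ 0 := by
      intro h
      apply hμ
      rw [← hη2, h]; ring
    set c : ℂ := a 1 / η with hcdef
    set g : ℂ → ℂ := fun z => c * Complex.sinh (η * z) with hgdef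
    have hgd : DifferentiableOn ℂ g (ball (0:ℂ) R) :=
      ((Complex.differentiable_sinh.comp (differentiable_id.const_mul η)).const_mul c).differentiableOn
    have hgn : ∀ n, iteratedDeriv n g 0 = c * (η^n * (if Even n then 0 else 1)) := by
      intro n
      have h1 : iteratedDeriv n (fun z : ℂ => Complex.sinh (η * z))
          = fun z => η^n * iteratedDeriv n Complex.sinh (η*z) :=
        iteratedDeriv_comp_const_mul Complex.contDiff_sinh η
      have h2 : iteratedDeriv n g 0 = c * iteratedDeriv n (fun z : ℂ => Complex.sinh (η*z)) 0 := by
        rw [← iteratedDerivWithin_univ, ← iteratedDerivWithin_univ]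
        exact iteratedDerivWithin_const_mul_field c _
      rw [h2, h1]
      rw [(sinhCoshIter n).1]
      rcases Nat.even_or_odd n with he | ho
      · simp [he, Complex.sinh_zero]
      · simp [Nat.not_even_iff_odd.mpr ho, Complex.cosh_zero]
    have hfi : ∀ n, iteratedDeriv n f 0 = iteratedDeriv n g 0 := by
      intro n
      rw [hgn]
      rcases Nat.even_or_odd n with ⟨k, hk⟩ | ⟨k, hk⟩
      · have hn : n = 2*k := by omega
        subst hn
        rw [if_pos ⟨k, by ring⟩, mul_zero, mul_zero]
        exact (hclosed k).1
      · have hn : n = 2*k+1 := by omega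
        subst hn
        have hne : ¬ Even (2*k+1) := by
          simp [Nat.even_add_one, Nat.even_mul]
        rw [if_neg hne, mul_one]
        rw [show (iteratedDeriv (2*k+1) f 0) = a (2*k+1) from rfl, (hclosed k).2]
        rw [hcdef, show η^(2*k+1) = (η^2)^k * η by ring, hη2]
        field_simp
    have hfx := eqOnBallOfIter hfd hgd hfi
    have h1' := hfx 1 (hmem 1 h1R)
    rw [hf1, hgdef] at h1'
    simp only [mul_one] at h1'
    have hsinh : Complex.sinh η ≠ 0 := by
      intro h
      rw [h, mul_zero] at h1'
      exact one_ne_zero h1'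
    refine ⟨η, fun x hx => ?_⟩
    rw [if_neg hη0, hfx x hx]
    show c * Complex.sinh (η * x) = Complex.sinh (η * x) / Complex.sinh η
    have hc : c = (Complex.sinh η)⁻¹ := by
      rw [inv_eq_one_div]
      exact (eq_div_iff hsinh).mpr h1'.symm
    rw [hc, div_eq_mul_inv, mul_comm]
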